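/- Let A be a unital C*-algebra with real rank zero, and let a_1, a_2, a_3 ∈ A satisfy 0 ≤ a_1 ≤ a_2 ≤ a_3 ≤ 1, a_3 a_2 = a_2, and a_2 a_1 = a_1. Then there exists a projection e ∈ A such that e a_1 = a_1 e = a_1 and a_3 e = e a_3 = e. -/

import Mathlib

section RR0Helpers

open CFC

variable {A : Type*} [CStarAlgebra A] [PartialOrder A] [StarOrderedRing A]


section Helpers



lemma sqrt_mul_eq_zero' {x y : A} (hx : 0 ≤ x) (h : x * y = 0) : sqrt x * y = 0 := by
  have hs : star (sqrt x) = sqrt x := (IsSelfAdjoint.of_nonneg (sqrt_nonneg _)).star_eq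
  have h' : star (sqrt x * y) * (sqrt x * y) = 0 := by
    rw [star_mul, hs, mul_assoc, ← mul_assoc (sqrt x), sqrt_mul_sqrt_self x hx, ← mul_assoc,
      mul_assoc (star y), h, mul_zero]
  exact (CStarRing.star_mul_self_eq_zero_iff _).mp h'

lemma mul_sqrt_eq_zero' {x y : A} (hx : 0 ≤ x) (h : y * x = 0) : y * sqrt x = 0 := by
  have hxsa : IsSelfAdjoint x := .of_nonneg hx
  have h2 : x * star y = 0 := by
    have := congrArg star h
    rwa [star_mul, hxsa.star_eq, star_zero] at this
  have h3 := sqrt_mul_eq_zero' hx h2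
  have := congrArg star h3
  rwa [star_mul, star_star, (IsSelfAdjoint.of_nonneg (sqrt_nonneg _)).star_eq, star_zero] at this

lemma sqrt_mul_eq_self' {x y : A} (hx : 0 ≤ x) (h : x * y = y) : sqrt x * y = y := by
  have hu : IsUnit (1 + sqrt x) :=
    CStarAlgebra.isUnit_of_le 1 (le_add_of_nonneg_right (sqrt_nonneg _)) ⟨zero_le_one, isUnit_one⟩
  have hz : (1 + sqrt x) * ((1 - sqrt x) * y) = 0 := by
    rw [← mul_assoc]
    have h1 : (1 + sqrt x) * (1 - sqrt x) = 1 - x := by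
      have h2 := sqrt_mul_sqrt_self x hx
      rw [mul_sub, mul_one, add_mul, one_mul, h2]
      abel
    rw [h1, sub_mul, one_mul, h, sub_self]
  have h0 : (1 - sqrt x) * y = 0 := (hu.mul_right_eq_zero).mp hz
  rw [sub_mul, one_mul, sub_eq_zero] at h0
  exact h0.symm

end Helpers



lemma aux_corner_proj {x p : A} (hx : 0 ≤ x) (hpsa : IsSelfAdjoint p) (hpp : p * p = p)
    (hlow : (4 : ℝ)⁻¹ • p ≤ p * x * p) :
    ∃ e y : A, IsSelfAdjoint e ∧ e * e = e ∧ e = sqrt x * y * sqrt x ∧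
      e * (sqrt x * p) = sqrt x * p := by
  have hxsa : IsSelfAdjoint x := .of_nonneg hx
  obtain ⟨r, hr⟩ : ∃ r : A, r = 1 - p := ⟨_, rfl⟩
  have hrr : r * r = r := by
    simp only [hr, mul_sub, sub_mul, mul_one, one_mul, hpp]; abel
  have hpr : p * r = 0 := by rw [hr, mul_sub, mul_one, hpp, sub_self]
  have hrp : r * p = 0 := by rw [hr, sub_mul, one_mul, hpp, sub_self]
  have hrsa : IsSelfAdjoint r := hr ▸ (IsSelfAdjoint.one A).sub hpsa
  have hrnn : (0 : A) ≤ r := by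
    have h1 := star_mul_self_nonneg r
    rwa [hrsa.star_eq, hrr] at h1
  obtain ⟨t, ht⟩ : ∃ t : A, t = p * x * p := ⟨_, rfl⟩
  have htsa : IsSelfAdjoint t := by
    rw [ht]
    have : star (p * x * p) = p * x * p := by
      simp only [star_mul, hpsa.star_eq, hxsa.star_eq, mul_assoc]
    exact this
  obtain ⟨T, hT⟩ : ∃ T : A, T = t + r := ⟨_, rfl⟩
  have hTsa : IsSelfAdjoint T := hT ▸ htsa.add hrsa
  have hTle : (4 : ℝ)⁻¹ • (1 : A) ≤ T := by
    rw [← sub_nonneg]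
    have key : T - (4 : ℝ)⁻¹ • 1 = (t - (4 : ℝ)⁻¹ • p) + (3 / 4 : ℝ) • r := by
      have h1 : (1 : A) = p + r := by rw [hr]; abel
      rw [hT, h1]
      module
    rw [key]
    exact add_nonneg (sub_nonneg.mpr (ht ▸ hlow)) (smul_nonneg (by norm_num) hrnn)
  have hT4 : IsUnit ((4 : ℝ)⁻¹ • (1 : A)) := by
    have h1 : ((4 : ℝ)⁻¹ • (1 : A)) * ((4 : ℝ) • (1 : A)) = 1 := by
      rw [smul_mul_assoc, mul_smul_comm, smul_smul, one_mul]; norm_num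
    have h2 : ((4 : ℝ) • (1 : A)) * ((4 : ℝ)⁻¹ • (1 : A)) = 1 := by
      rw [smul_mul_assoc, mul_smul_comm, smul_smul, one_mul]; norm_num
    exact ⟨⟨_, _, h1, h2⟩, rfl⟩
  have hTu : IsUnit T :=
    CStarAlgebra.isUnit_of_le _ hTle ⟨smul_nonneg (by norm_num) zero_le_one, hT4⟩
  obtain ⟨U, hU⟩ := hTu
  obtain ⟨Ti, hTi⟩ : ∃ Ti : A, Ti = ↑U⁻¹ := ⟨_, rfl⟩
  have hTiT : Ti * T = 1 := by rw [hTi, ← hU]; exact U.inv_mul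
  have hTTi : T * Ti = 1 := by rw [hTi, ← hU]; exact U.mul_inv
  have hpt : p * t = t := by rw [ht, ← mul_assoc, ← mul_assoc, hpp]
  have htp : t * p = t := by rw [ht, mul_assoc, hpp]
  have hrt : r * t = 0 := by rw [ht, ← mul_assoc, ← mul_assoc, hrp, zero_mul, zero_mul]
  have htr : t * r = 0 := by rw [ht, mul_assoc, hpr, mul_zero]
  have hTr : T * r = r := by rw [hT, add_mul, htr, hrr, zero_add]
  have hrT : r * T = r := by rw [hT, mul_add, hrt, hrr, zero_add]
  have hTir : Ti * r = r := by
    calc Ti * r = Ti * (T * r) := by rw [hTr]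
      _ = (Ti * T) * r := by rw [mul_assoc]
      _ = r := by rw [hTiT, one_mul]
  have hrTi : r * Ti = r := by
    calc r * Ti = (r * T) * Ti := by rw [hrT]
      _ = r * (T * Ti) := by rw [mul_assoc]
      _ = r := by rw [hTTi, mul_one]
  have hTisa : IsSelfAdjoint Ti := by
    have h1 : T * star Ti = 1 := by
      have h2 := congrArg star hTiT
      rwa [star_mul, hTsa.star_eq, star_one] at h2
    have : star Ti = Ti := by
      calc star Ti = (Ti * T) * star Ti := by rw [hTiT, one_mul]
        _ = Ti * (T * star Ti) := by rw [mul_assoc]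
        _ = Ti := by rw [h1, mul_one]
    exact this
  obtain ⟨s, hs⟩ : ∃ s : A, s = Ti - r := ⟨_, rfl⟩
  have hssa : IsSelfAdjoint s := hs ▸ hTisa.sub hrsa
  have hp1 : p = 1 - r := by rw [hr]; abel
  have hsp : s * p = s := by
    have hTip : Ti * p = s := by rw [hp1, mul_sub, mul_one, hTir, hs]
    rw [hs, sub_mul, hrp, sub_zero, hTip, hs]
  have hps : p * s = s := by
    have hpTi : p * Ti = s := by rw [hp1, sub_mul, one_mul, hrTi, hs]
    rw [hs, mul_sub, hpr, sub_zero, hpTi, hs]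
  have hTt : t = T - r := by rw [hT]; abel
  have hst : s * t = p := by
    calc s * t = Ti * t - r * t := by rw [hs, sub_mul]
      _ = Ti * (T - r) - 0 := by rw [hrt, hTt]
      _ = Ti * T - Ti * r := by rw [mul_sub, sub_zero]
      _ = 1 - r := by rw [hTiT, hTir]
      _ = p := hp1.symm
  obtain ⟨c, hc⟩ : ∃ c : A, c = sqrt x := ⟨_, rfl⟩
  have hcc : c * c = x := by rw [hc]; exact sqrt_mul_sqrt_self x hx
  have hcsa : IsSelfAdjoint c := hc ▸ .of_nonneg (sqrt_nonneg _)
  have hsxp : s * x * p = p := by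
    calc s * x * p = (s * p) * x * p := by rw [hsp]
      _ = s * (p * x * p) := by simp only [mul_assoc]
      _ = s * t := by rw [← ht]
      _ = p := hst
  have hsxs : s * x * s = s := by
    calc s * x * s = (s * x) * (p * s) := by rw [hps]
      _ = (s * x * p) * s := (mul_assoc _ _ _).symm
      _ = p * s := by rw [hsxp]
      _ = s := hps
  rw [← hc]
  refine ⟨c * s * c, s, ?_, ?_, rfl, ?_⟩
  · have : star (c * s * c) = c * s * c := by
      simp only [star_mul, hcsa.star_eq, hssa.star_eq, mul_assoc]
    exact this
  · calc (c * s * c) * (c * s * c) = c * (s * (c * c) * s) * c := by simp only [mul_assoc]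
      _ = c * (s * x * s) * c := by rw [hcc]
      _ = c * s * c := by rw [hsxs, mul_assoc]
  · calc (c * s * c) * (c * p) = c * (s * (c * c) * p) := by simp only [mul_assoc]
      _ = c * (s * x * p) := by rw [hcc]
      _ = c * p := by rw [hsxp]





theorem exists_projection_between'
    (hRR0 : ∀ a : A, IsSelfAdjoint a → ∀ ε : ℝ, 0 < ε →
      ∃ b : A, IsSelfAdjoint b ∧ IsUnit b ∧ ‖a - b‖ < ε)
    (a₁ a₂ a₃ : A)
    (h₀ : 0 ≤ a₁) (h₁₂ : a₁ ≤ a₂) (h₂₃ : a₂ ≤ a₃) (h₃ : a₃ ≤ 1)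
    (h₃₂ : a₃ * a₂ = a₂) (h₂₁ : a₂ * a₁ = a₁) :
    ∃ e : A, IsSelfAdjoint e ∧ IsIdempotentElem e ∧
      e * a₁ = a₁ ∧ a₁ * e = a₁ ∧ a₃ * e = e ∧ e * a₃ = e := by
  have sa1 : IsSelfAdjoint a₁ := .of_nonneg h₀
  have h0₂ : (0:A) ≤ a₂ := h₀.trans h₁₂
  have sa2 : IsSelfAdjoint a₂ := .of_nonneg h0₂
  have h0₃ : (0:A) ≤ a₃ := h0₂.trans h₂₃
  have sa3 : IsSelfAdjoint a₃ := .of_nonneg h0₃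
  have hsa : IsSelfAdjoint (a₂ - (2⁻¹:ℝ) • 1) :=
    sa2.sub ((IsSelfAdjoint.all _).smul (IsSelfAdjoint.one A))
  obtain ⟨b, hbsa, hbu, hbn⟩ := hRR0 _ hsa 4⁻¹ (by norm_num)
  obtain ⟨d, hd⟩ : ∃ d : A, d = a₂ - (2⁻¹:ℝ) • 1 - b := ⟨_, rfl⟩
  have hdsa : IsSelfAdjoint d := hd ▸ hsa.sub hbsa
  have hdn : ‖d‖ ≤ (4:ℝ)⁻¹ := by rw [hd]; exact hbn.le
  have hd_le : d ≤ (4:ℝ)⁻¹ • 1 := by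
    calc d ≤ algebraMap ℝ A ‖d‖ := hdsa.le_algebraMap_norm_self
      _ = ‖d‖ • 1 := Algebra.algebraMap_eq_smul_one _
      _ ≤ (4:ℝ)⁻¹ • 1 := smul_le_smul_of_nonneg_right hdn zero_le_one
  have hd_ge : -((4:ℝ)⁻¹ • (1:A)) ≤ d := by
    calc -((4:ℝ)⁻¹ • (1:A)) ≤ -(‖d‖ • (1:A)) :=
          neg_le_neg (smul_le_smul_of_nonneg_right hdn zero_le_one)
      _ = -(algebraMap ℝ A ‖d‖) := by rw [Algebra.algebraMap_eq_smul_one]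
      _ ≤ d := hdsa.neg_algebraMap_norm_le_self
  have ha2 : a₂ = d + b + (2⁻¹:ℝ) • 1 := by rw [hd]; abel
  have hb0 : (0:ℝ) ∉ spectrum ℝ b := spectrum.zero_notMem ℝ hbu
  obtain ⟨g, hgdef⟩ : ∃ g : ℝ → ℝ, g = fun t => if 0 < t then 1 else 0 := ⟨_, rfl⟩
  have hgcont : ∀ t : ℝ, t ≠ 0 → ContinuousAt g t := by
    intro t htne
    rcases htne.lt_or_gt with hlt | hlt
    · have hmem : {s : ℝ | s < 0} ∈ nhds t := isOpen_Iio.mem_nhds hlt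
      have hev : g =ᶠ[nhds t] fun _ => (0:ℝ) := by
        filter_upwards [hmem] with s hs
        rw [hgdef]; simp [not_lt.mpr hs.le]
      exact hev.continuousAt
    · have hmem : {s : ℝ | 0 < s} ∈ nhds t := isOpen_Ioi.mem_nhds hlt
      have hev : g =ᶠ[nhds t] fun _ => (1:ℝ) := by
        filter_upwards [hmem] with s hs
        rw [hgdef]; simp [hs]
      exact hev.continuousAt
  have hg : ContinuousOn g (spectrum ℝ b) := fun s hs =>
    (hgcont s (fun h => hb0 (h ▸ hs))).continuousWithinAt
  obtain ⟨g', hg'def⟩ : ∃ g' : ℝ → ℝ, g' = fun t => 1 - g t := ⟨_, rfl⟩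
  have hg' : ContinuousOn g' (spectrum ℝ b) := by
    rw [hg'def]; exact continuousOn_const.sub hg
  obtain ⟨p, hpdef⟩ : ∃ p : A, p = cfc g b := ⟨_, rfl⟩
  obtain ⟨r, hrdef⟩ : ∃ r : A, r = cfc g' b := ⟨_, rfl⟩
  have hpsa : IsSelfAdjoint p := hpdef ▸ cfc_predicate g b
  have hrsa : IsSelfAdjoint r := hrdef ▸ cfc_predicate g' b
  have hpp : p * p = p := by
    rw [hpdef, ← cfc_mul g g b hg hg]
    exact cfc_congr fun t _ => by rw [hgdef]; by_cases h : 0 < t <;> simp [h]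
  have hrr : r * r = r := by
    rw [hrdef, ← cfc_mul g' g' b hg' hg']
    exact cfc_congr fun t _ => by rw [hg'def, hgdef]; by_cases h : 0 < t <;> simp [h]
  have hpr1 : p + r = 1 := by
    rw [hpdef, hrdef, ← cfc_add b g g' hg hg']
    have : (fun t => g t + g' t) = fun _ : ℝ => (1:ℝ) := funext fun t => by rw [hg'def]; ring
    rw [this]
    exact cfc_const_one ℝ b
  have hr1p : r = 1 - p := by rw [← hpr1]; abel
  have hpnorm : ‖p‖ ≤ 1 := by
    rw [hpdef]
    refine norm_cfc_le zero_le_one fun t _ => ?_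
    rw [hgdef]; by_cases h : 0 < t <;> simp [h]
  have hid : cfc (fun t : ℝ => t) b = b := cfc_id' ℝ b
  have h1 : cfc (fun t => g t * t) b = p * b := by
    rw [cfc_mul g (fun t : ℝ => t) b hg continuousOn_id, hid, hpdef]
  have hpbp : 0 ≤ p * b * p := by
    have h2 : cfc (fun t => g t * t * g t) b = p * b * p := by
      rw [cfc_mul (fun t : ℝ => g t * t) g b (hg.mul continuousOn_id) hg, h1, ← hpdef]
    rw [← h2]
    refine cfc_nonneg fun t _ => ?_
    rw [hgdef]
    by_cases h : 0 < t
    · simp [h, h.le]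
    · simp [h]
  have h1' : cfc (fun t => g' t * t) b = r * b := by
    rw [cfc_mul g' (fun t : ℝ => t) b hg' continuousOn_id, hid, hrdef]
  have hrbr : r * b * r ≤ 0 := by
    have h2 : cfc (fun t => g' t * t * g' t) b = r * b * r := by
      rw [cfc_mul (fun t : ℝ => g' t * t) g' b (hg'.mul continuousOn_id) hg', h1', ← hrdef]
    rw [← h2]
    refine cfc_nonpos _ _ fun t _ => ?_
    rw [hg'def, hgdef]
    by_cases h : 0 < t
    · simp [h]
    · simp only [h, if_false]
      nlinarith [not_lt.mp h]
  -- conjugation inequalities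
  have hpdp : -((4:ℝ)⁻¹ • p) ≤ p * d * p := by
    have hc := star_left_conjugate_le_conjugate hd_ge p
    rw [hpsa.star_eq] at hc
    have he : p * (-((4:ℝ)⁻¹ • (1:A))) * p = -((4:ℝ)⁻¹ • p) := by
      rw [mul_neg, neg_mul, mul_smul_comm, smul_mul_assoc, mul_one, hpp]
    rw [he] at hc
    exact hc
  have hrdr : r * d * r ≤ (4:ℝ)⁻¹ • r := by
    have hc := star_left_conjugate_le_conjugate hd_le r
    rw [hrsa.star_eq] at hc
    have he : r * ((4:ℝ)⁻¹ • (1:A)) * r = (4:ℝ)⁻¹ • r := by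
      rw [mul_smul_comm, smul_mul_assoc, mul_one, hrr]
    rw [he] at hc
    exact hc
  have hpap : (4:ℝ)⁻¹ • p ≤ p * a₂ * p := by
    have hexp : p * a₂ * p = p * d * p + p * b * p + (2⁻¹:ℝ) • p := by
      rw [ha2]
      simp only [mul_add, add_mul, mul_smul_comm, smul_mul_assoc, mul_one, hpp]
    rw [hexp]
    calc (4:ℝ)⁻¹ • p = -((4:ℝ)⁻¹ • p) + 0 + (2⁻¹:ℝ) • p := by module
      _ ≤ p * d * p + p * b * p + (2⁻¹:ℝ) • p :=
          add_le_add (add_le_add hpdp hpbp) le_rfl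
  have hrar : r * a₂ * r ≤ (3/4:ℝ) • r := by
    have hexp : r * a₂ * r = r * d * r + r * b * r + (2⁻¹:ℝ) • r := by
      rw [ha2]
      simp only [mul_add, add_mul, mul_smul_comm, smul_mul_assoc, mul_one, hrr]
    rw [hexp]
    calc r * d * r + r * b * r + (2⁻¹:ℝ) • r ≤ (4:ℝ)⁻¹ • r + 0 + (2⁻¹:ℝ) • r :=
          add_le_add (add_le_add hrdr hrbr) le_rfl
      _ = (3/4:ℝ) • r := by module
  have hrBr : (4:ℝ)⁻¹ • r ≤ r * (1 - a₂) * r := by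
    have h1 : r * (1 - a₂) * r = r - r * a₂ * r := by
      rw [mul_sub, sub_mul, mul_one, hrr]
    rw [h1]
    calc (4:ℝ)⁻¹ • r = r - (3/4:ℝ) • r := by module
      _ ≤ r - r * a₂ * r := sub_le_sub_left hrar r
  -- first application: make the complement exactly orthogonal to a₁
  have hB : (0:A) ≤ 1 - a₂ := sub_nonneg.mpr (h₂₃.trans h₃)
  obtain ⟨qb, y₁, hqbsa, hqbidem, hqbform, hqbfix⟩ := aux_corner_proj hB hrsa hrr hrBr
  obtain ⟨Bs, hBs⟩ : ∃ Bs : A, Bs = sqrt (1 - a₂) := ⟨_, rfl⟩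
  rw [← hBs] at hqbform hqbfix
  have hBs2 : Bs * Bs = 1 - a₂ := by rw [hBs]; exact sqrt_mul_sqrt_self _ hB
  have hBssa : IsSelfAdjoint Bs := hBs ▸ .of_nonneg (sqrt_nonneg _)
  obtain ⟨q, hq⟩ : ∃ q : A, q = 1 - qb := ⟨_, rfl⟩
  have hqsa : IsSelfAdjoint q := hq ▸ (IsSelfAdjoint.one A).sub hqbsa
  have hqq : q * q = q := by
    simp only [hq, mul_sub, sub_mul, mul_one, one_mul, hqbidem]; abel
  have hBa₁ : (1 - a₂) * a₁ = 0 := by rw [sub_mul, one_mul, h₂₁, sub_self]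
  have hBsa₁ : Bs * a₁ = 0 := by rw [hBs]; exact sqrt_mul_eq_zero' hB hBa₁
  have hqba₁ : qb * a₁ = 0 := by
    rw [hqbform, mul_assoc, hBsa₁, mul_zero]
  have hqa₁ : q * a₁ = a₁ := by rw [hq, sub_mul, one_mul, hqba₁, sub_zero]
  have hqBsr : q * (Bs * r) = 0 := by rw [hq, sub_mul, one_mul, hqbfix, sub_self]
  have hrBsq : r * Bs * q = 0 := by
    have hstar := congrArg star hqBsr
    rwa [star_mul, star_mul, hqsa.star_eq, hrsa.star_eq, hBssa.star_eq, star_zero] at hstar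
  -- norm estimate
  have hpBp_le : p * (1 - a₂) * p ≤ (3/4:ℝ) • p := by
    have h1 : p * (1 - a₂) * p = p - p * a₂ * p := by
      rw [mul_sub, sub_mul, mul_one, hpp]
    rw [h1]
    calc p - p * a₂ * p ≤ p - (4:ℝ)⁻¹ • p := sub_le_sub_left hpap p
      _ = (3/4:ℝ) • p := by module
  have hpnn : (0:A) ≤ p := by
    have h1 := star_mul_self_nonneg p
    rwa [hpsa.star_eq, hpp] at h1
  have hpBp_nn : 0 ≤ p * (1 - a₂) * p := by
    have h1 := star_left_conjugate_nonneg hB p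
    rwa [hpsa.star_eq] at h1
  have hnorm1 : ‖p * (1 - a₂) * p‖ ≤ 3/4 := by
    calc ‖p * (1 - a₂) * p‖ ≤ ‖(3/4:ℝ) • p‖ :=
          CStarAlgebra.norm_le_norm_of_nonneg_of_le hpBp_nn hpBp_le
      _ = (3/4:ℝ) * ‖p‖ := by
          rw [norm_smul, Real.norm_eq_abs, abs_of_nonneg (by norm_num : (0:ℝ) ≤ 3/4)]
      _ ≤ 3/4 := by nlinarith [hpnorm, norm_nonneg p]
  have hBpB_nn : (0:A) ≤ Bs * p * Bs := by
    have h1 := star_left_conjugate_nonneg hpnn Bs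
    rwa [hBssa.star_eq] at h1
  have hnorm2 : ‖Bs * p * Bs‖ = ‖p * (1 - a₂) * p‖ := by
    have e1 : Bs * p * Bs = star (p * Bs) * (p * Bs) := by
      rw [star_mul, hpsa.star_eq, hBssa.star_eq]
      calc Bs * p * Bs = Bs * (p * p) * Bs := by rw [hpp]
        _ = (Bs * p) * (p * Bs) := by simp only [mul_assoc]
    have e2 : p * (1 - a₂) * p = (p * Bs) * star (p * Bs) := by
      rw [star_mul, hpsa.star_eq, hBssa.star_eq]
      calc p * (1 - a₂) * p = p * (Bs * Bs) * p := by rw [hBs2]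
        _ = (p * Bs) * (Bs * p) := by simp only [mul_assoc]
    rw [e1, e2, CStarRing.norm_star_mul_self, CStarRing.norm_self_mul_star]
  have hBpB_le1 : Bs * p * Bs ≤ (3/4:ℝ) • 1 := by
    calc Bs * p * Bs ≤ algebraMap ℝ A ‖Bs * p * Bs‖ :=
          (IsSelfAdjoint.of_nonneg hBpB_nn).le_algebraMap_norm_self
      _ = ‖Bs * p * Bs‖ • 1 := Algebra.algebraMap_eq_smul_one _
      _ ≤ (3/4:ℝ) • 1 :=
          smul_le_smul_of_nonneg_right (le_of_eq_of_le hnorm2 hnorm1) zero_le_one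
  have hqBq : q * (1 - a₂) * q = q * (Bs * p * Bs) * q := by
    have h3 : q * (Bs * (r * Bs)) * q = 0 := by
      have h4 : q * (Bs * (r * Bs)) = (q * (Bs * r)) * Bs := by simp only [mul_assoc]
      rw [h4, hqBsr, zero_mul, zero_mul]
    calc q * (1 - a₂) * q = q * (Bs * ((p + r) * Bs)) * q := by
          rw [hpr1, one_mul, hBs2]
      _ = q * (Bs * (p * Bs)) * q + q * (Bs * (r * Bs)) * q := by
          rw [add_mul, mul_add, mul_add, add_mul]
      _ = q * (Bs * (p * Bs)) * q := by rw [h3, add_zero]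
      _ = q * (Bs * p * Bs) * q := by rw [mul_assoc Bs p Bs]
  have hqBq_le : q * (1 - a₂) * q ≤ (3/4:ℝ) • q := by
    rw [hqBq]
    have hc := star_left_conjugate_le_conjugate hBpB_le1 q
    rw [hqsa.star_eq] at hc
    calc q * (Bs * p * Bs) * q ≤ q * ((3/4:ℝ) • (1:A)) * q := hc
      _ = (3/4:ℝ) • (q * q) := by rw [mul_smul_comm, smul_mul_assoc, mul_one]
      _ = (3/4:ℝ) • q := by rw [hqq]
  have hqaq : (4:ℝ)⁻¹ • q ≤ q * a₂ * q := by
    have h1 : q * a₂ * q = q - q * (1 - a₂) * q := by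
      rw [mul_sub, sub_mul, mul_one, hqq]; abel
    rw [h1]
    calc (4:ℝ)⁻¹ • q = q - (3/4:ℝ) • q := by module
      _ ≤ q - q * (1 - a₂) * q := sub_le_sub_left hqBq_le q
  -- second application
  obtain ⟨e, y₂, hesa, heidem, heform, hefix⟩ := aux_corner_proj h0₂ hqsa hqq hqaq
  obtain ⟨As, hAs⟩ : ∃ As : A, As = sqrt a₂ := ⟨_, rfl⟩
  rw [← hAs] at heform hefix
  have h3A : (1 - a₃) * a₂ = 0 := by rw [sub_mul, one_mul, h₃₂, sub_self]
  have h3As : (1 - a₃) * As = 0 := by rw [hAs]; exact mul_sqrt_eq_zero' h0₂ h3A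
  have ha₃As : a₃ * As = As := by
    rw [sub_mul, one_mul, sub_eq_zero] at h3As
    exact h3As.symm
  have ha₃e : a₃ * e = e := by
    rw [heform, ← mul_assoc, ← mul_assoc, ha₃As]
  have hea₃ : e * a₃ = e := by
    have hstar := congrArg star ha₃e
    rwa [star_mul, hesa.star_eq, sa3.star_eq] at hstar
  have hAsa₁ : As * a₁ = a₁ := by rw [hAs]; exact sqrt_mul_eq_self' h0₂ h₂₁
  have hea₁ : e * a₁ = a₁ := by
    calc e * a₁ = e * (As * (q * a₁)) := by rw [hqa₁, hAsa₁]
      _ = (e * (As * q)) * a₁ := by simp only [mul_assoc]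
      _ = (As * q) * a₁ := by rw [hefix]
      _ = As * (q * a₁) := mul_assoc _ _ _
      _ = a₁ := by rw [hqa₁, hAsa₁]
  have ha₁e : a₁ * e = a₁ := by
    have hstar := congrArg star hea₁
    rwa [star_mul, hesa.star_eq, sa1.star_eq] at hstar
  exact ⟨e, hesa, heidem, hea₁, ha₁e, ha₃e, hea₃⟩


end RR0Helpers


/-- Let `A` be a unital C*-algebra with real rank zero (the invertible
self-adjoint elements are dense in the self-adjoint elements), and let
`a₁, a₂, a₃ ∈ A` satisfy `0 ≤ a₁ ≤ a₂ ≤ a₃ ≤ 1`, `a₃ a₂ = a₂`, and `a₂ a₁ = a₁`.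
Then there is a projection `e ∈ A` with `e a₁ = a₁ e = a₁` and `a₃ e = e a₃ = e`. -/
theorem exists_projection_between
    {A : Type*} [CStarAlgebra A] [PartialOrder A] [StarOrderedRing A]
    (hRR0 : ∀ a : A, IsSelfAdjoint a → ∀ ε : ℝ, 0 < ε →
      ∃ b : A, IsSelfAdjoint b ∧ IsUnit b ∧ ‖a - b‖ < ε)
    (a₁ a₂ a₃ : A)
    (h₀ : 0 ≤ a₁) (h₁₂ : a₁ ≤ a₂) (h₂₃ : a₂ ≤ a₃) (h₃ : a₃ ≤ 1)
    (h₃₂ : a₃ * a₂ = a₂) (h₂₁ : a₂ * a₁ = a₁) :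
    ∃ e : A, IsSelfAdjoint e ∧ IsIdempotentElem e ∧
      e * a₁ = a₁ ∧ a₁ * e = a₁ ∧ a₃ * e = e ∧ e * a₃ = e :=
  exists_projection_between' hRR0 a₁ a₂ a₃ h₀ h₁₂ h₂₃ h₃ h₃₂ h₂₁
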